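/- arXiv:1401.6061 — 2 statements merged into one kernel-verified Lean document; each statement's English description precedes it below -/
import Mathlib

section
/- Let 0 < κ ≤ ℵ0 be a cardinal number. There is a set A_κ ⊆ ωω such that the game GS_ω(A_κ,n) is undetermined for every n with 0 < n < κ, while ONE has a strategy σ in GS_ω(A_κ,ℵ0) such that in every play (f_n : n < ω) in which ONE follows σ, the set of boards ξ < ω for which (f_n(ξ) : n < ω) ∉ A_κ has cardinality less than κ (hence ONE has a winning strategy in GS_ω(A_κ,κ)). -/
open Cardinal Set

namespace GamePaper

universe u

/-! ### Gale–Stewart style games.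
A play is a sequence `p : ℕ → M`; player ONE (resp. White) moves at even indices,
player TWO (resp. Black) at odd indices.  A strategy for a player is a function
assigning to the finite sequence of the opponent's prior moves the player's next move. -/

/-- ONE's moves in the play `p` are obtained from the strategy `σ` applied to the
list of TWO's prior moves. -/
def OneFollows {M : Type*} (σ : List M → M) (p : ℕ → M) : Prop :=
  ∀ n : ℕ, p (2 * n) = σ (List.ofFn fun i : Fin n => p (2 * (i : ℕ) + 1))

/-- TWO's moves in the play `p` are obtained from the strategy `σ` applied to the
list of ONE's prior moves. -/
def TwoFollows {M : Type*} (σ : List M → M) (p : ℕ → M) : Prop :=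
  ∀ n : ℕ, p (2 * n + 1) = σ (List.ofFn fun i : Fin (n + 1) => p (2 * (i : ℕ)))

/-- ONE has a winning strategy in the Gale–Stewart game `GS_Λ(A)`. -/
def OneWinsGS {Λ : Type*} (A : Set (ℕ → Λ)) : Prop :=
  ∃ σ : List Λ → Λ, ∀ p : ℕ → Λ, OneFollows σ p → p ∈ A

/-- TWO has a winning strategy in the Gale–Stewart game `GS_Λ(A)`. -/
def TwoWinsGS {Λ : Type*} (A : Set (ℕ → Λ)) : Prop :=
  ∃ σ : List Λ → Λ, ∀ p : ℕ → Λ, TwoFollows σ p → p ∉ A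

/-- ONE has a winning strategy in the multiboard game `GS_Λ(A, K)`:
moves are functions `K → Λ`, and ONE wins a play if on some board `ξ` the induced
play belongs to `A`. -/
def OneWinsGSBoards (Λ K : Type*) (A : Set (ℕ → Λ)) : Prop :=
  ∃ σ : List (K → Λ) → K → Λ, ∀ q : ℕ → K → Λ, OneFollows σ q →
    ∃ ξ : K, (fun n => q n ξ) ∈ A

/-- TWO has a winning strategy in the multiboard game `GS_Λ(A, K)`. -/
def TwoWinsGSBoards (Λ K : Type*) (A : Set (ℕ → Λ)) : Prop :=
  ∃ σ : List (K → Λ) → K → Λ, ∀ q : ℕ → K → Λ, TwoFollows σ q →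
    ∀ ξ : K, (fun n => q n ξ) ∉ A

/-- The multiboard Gale–Stewart game `GS_Λ(A, K)` is determined. -/
def GSBoardsDetermined (Λ K : Type*) (A : Set (ℕ → Λ)) : Prop :=
  OneWinsGSBoards Λ K A ∨ TwoWinsGSBoards Λ K A

/-- `D(λ, κ)` : every multiboard Gale–Stewart game on `κ` boards with moves in `λ`
is determined. -/
def DProp (Λ K : Type*) : Prop :=
  ∀ A : Set (ℕ → Λ), GSBoardsDetermined Λ K A

/-! ### Laver games -/

/-- ONE wins the play `q` of the Laver game `LG(Λ, K)`. -/
def LaverWin (Λ K : Type*) (q : ℕ → K → Λ) : Prop :=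
  ∀ S : Set (ℕ → Λ), ¬ TwoWinsGS S → ∃ ξ : K, (fun n => q n ξ) ∈ S

/-- `L(λ, κ)` : ONE has a winning strategy in the Laver game `LG(Λ, K)`. -/
def OneWinsLG (Λ K : Type*) : Prop :=
  ∃ σ : List (K → Λ) → K → Λ, ∀ q : ℕ → K → Λ, OneFollows σ q → LaverWin Λ K q

/-- TWO has a winning strategy in the Laver game `LG(Λ, K)`. -/
def TwoWinsLG (Λ K : Type*) : Prop :=
  ∃ σ : List (K → Λ) → K → Λ, ∀ q : ℕ → K → Λ, TwoFollows σ q → ¬ LaverWin Λ K q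

/-! ### Ulam's cut-and-choose games `UG(λ, κ)`.
White first chooses `f 0 : K → Λ`; thereafter Black chooses `(ξ (2n), f (2n+1))` and
White responds with `(ξ (2n+1), f (2n+2))`.  White wins iff for some `α : K`,
`f n α = ξ n` for all `n`. -/

/-- A strategy for White in `UG(Λ, K)`: a first move, and a response to each finite
sequence of Black's prior moves. -/
structure UGWhiteStrategy (Λ K : Type*) where
  first : K → Λ
  move : List (Λ × (K → Λ)) → Λ × (K → Λ)

/-- White's moves in the play `(ξ, f)` of `UG(Λ, K)` follow the strategy `σ`. -/
def UGWhiteFollows {Λ K : Type*} (σ : UGWhiteStrategy Λ K) (ξ : ℕ → Λ) (f : ℕ → K → Λ) :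
    Prop :=
  f 0 = σ.first ∧
  ∀ n : ℕ, (ξ (2 * n + 1), f (2 * n + 2)) =
    σ.move (List.ofFn fun i : Fin (n + 1) => (ξ (2 * (i : ℕ)), f (2 * (i : ℕ) + 1)))

/-- `U(λ, κ)` : White has a winning strategy in the cut-and-choose game `UG(Λ, K)`. -/
def WhiteWinsUG (Λ K : Type*) : Prop :=
  ∃ σ : UGWhiteStrategy Λ K, ∀ (ξ : ℕ → Λ) (f : ℕ → K → Λ),
    UGWhiteFollows σ ξ f → ∃ α : K, ∀ n : ℕ, f n α = ξ n

/-! ### Ideals and the game `G(J)` -/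

/-- `J` is an ideal of subsets: nonempty, closed under binary unions and subsets. -/
def IsIdeal {S : Type*} (J : Set (Set S)) : Prop :=
  J.Nonempty ∧ (∀ A B : Set S, A ∈ J → B ∈ J → A ∪ B ∈ J) ∧
    ∀ A B : Set S, B ∈ J → A ⊆ B → A ∈ J

/-- `J` is atomless: every `J`-positive set splits into two disjoint `J`-positive sets. -/
def IsAtomless {S : Type*} (J : Set (Set S)) : Prop :=
  ∀ X : Set S, X ∉ J → ∃ A B : Set S, A ∪ B = X ∧ Disjoint A B ∧ A ∉ J ∧ B ∉ J

/-- Legality of White's `n`-th move in the game `G(J)` (White plays `W n`,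
Black plays `B n`). -/
def GJWhiteLegal {S : Type*} (J : Set (Set S)) (W B : ℕ → Set S) : ℕ → Prop
  | 0 => W 0 ∉ J
  | n + 1 => W (n + 1) ∉ J ∧ W (n + 1) ⊆ B n

/-- Legality of Black's `n`-th move in the game `G(J)`. -/
def GJBlackLegal {S : Type*} (J : Set (Set S)) (W B : ℕ → Set S) (n : ℕ) : Prop :=
  B n ∉ J ∧ B n ⊆ W n

/-- Black has a winning strategy in the game `G(J)`: a strategy `τ` such that in any
play in which Black follows `τ`, Black's moves are legal as long as White's have been,
and if White always moves legally then `⋂ n, B n` is nonempty. -/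
def BlackWinsGJ {S : Type*} (J : Set (Set S)) : Prop :=
  ∃ τ : List (Set S) → Set S,
    ∀ W B : ℕ → Set S,
      (∀ n : ℕ, B n = τ (List.ofFn fun i : Fin (n + 1) => W (i : ℕ))) →
      (∀ n : ℕ, (∀ k ≤ n, GJWhiteLegal J W B k) → GJBlackLegal J W B n) ∧
      ((∀ n : ℕ, GJWhiteLegal J W B n) → (⋂ n, B n).Nonempty)

/-- The ideal `J` on `K` witnesses `I(λ, κ)`: it is a proper free ideal, `λ⁺`-complete,
every positive set has a partition into `λ` many disjoint positive sets, and there is a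
dense family in `J⁺` closed under countable descending intersections (nonempty). -/
def IdealWitness (Λ K : Type*) (J : Set (Set K)) : Prop :=
  IsIdeal J ∧ J ≠ Set.univ ∧ ⋃₀ J = Set.univ ∧
  (∀ A : Λ → Set K, (∀ i, A i ∈ J) → (⋃ i, A i) ∈ J) ∧
  (∀ X : Set K, X ∉ J → ∃ P : Λ → Set K, (⋃ i, P i) = X ∧
      (∀ i j : Λ, i ≠ j → Disjoint (P i) (P j)) ∧ ∀ i, P i ∉ J) ∧
  ∃ F : Set (Set K), (∀ Y ∈ F, Y ∉ J) ∧ (∀ X : Set K, X ∉ J → ∃ Y ∈ F, Y ⊆ X) ∧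
    ∀ Xs : ℕ → Set K, (∀ n, Xs n ∈ F) → (∀ n, Xs (n + 1) ⊆ Xs n) → (⋂ n, Xs n).Nonempty

/-- `I(λ, κ)` : some ideal on `K` witnesses the above. -/
def IProp (Λ K : Type*) : Prop := ∃ J : Set (Set K), IdealWitness Λ K J

/-! ### The Banach–Mazur game and box products -/

/-- Legality of White's `n`-th move in the Banach–Mazur game (White plays the sets of
even index of the play `p`). -/
def BMWhiteLegal {X : Type*} [TopologicalSpace X] (p : ℕ → Set X) : ℕ → Prop
  | 0 => IsOpen (p 0) ∧ (p 0).Nonempty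
  | n + 1 => IsOpen (p (2 * n + 2)) ∧ (p (2 * n + 2)).Nonempty ∧ p (2 * n + 2) ⊆ p (2 * n + 1)

/-- Legality of Black's `n`-th move in the Banach–Mazur game. -/
def BMBlackLegal {X : Type*} [TopologicalSpace X] (p : ℕ → Set X) (n : ℕ) : Prop :=
  IsOpen (p (2 * n + 1)) ∧ (p (2 * n + 1)).Nonempty ∧ p (2 * n + 1) ⊆ p (2 * n)

/-- Black has a winning strategy in the Banach–Mazur game `BM(X)`: a strategy `τ` such
that in any play where Black follows `τ`, Black's moves are legal as long as White's
have been, and if White always moves legally then the intersection of the play is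
nonempty. -/
def BlackWinsBM (X : Type*) [TopologicalSpace X] : Prop :=
  ∃ τ : List (Set X) → Set X,
    ∀ p : ℕ → Set X,
      (∀ n : ℕ, p (2 * n + 1) = τ (List.ofFn fun i : Fin (n + 1) => p (2 * (i : ℕ)))) →
      (∀ n : ℕ, (∀ k ≤ n, BMWhiteLegal p k) → BMBlackLegal p n) ∧
      ((∀ n : ℕ, BMWhiteLegal p n) → (⋂ n, p n).Nonempty)

/-- The box product topology on `ι → X`: generated by boxes `∏ i, U i` with all
`U i` open. -/
def boxTopology (ι X : Type*) [TopologicalSpace X] : TopologicalSpace (ι → X) :=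
  TopologicalSpace.generateFrom
    {S : Set (ι → X) | ∃ U : ι → Set X, (∀ i, IsOpen (U i)) ∧ S = Set.pi Set.univ U}

/-- `𝓑` is a π-base for `X`: a family of nonempty open sets such that every nonempty
open set contains a member of the family. -/
def IsPiBase (X : Type*) [TopologicalSpace X] (𝓑 : Set (Set X)) : Prop :=
  (∀ V ∈ 𝓑, IsOpen V ∧ V.Nonempty) ∧
    ∀ U : Set X, IsOpen U → U.Nonempty → ∃ V ∈ 𝓑, V ⊆ U

/-! ### Interlaced sets -/

/-- `A` and `B` are interlaced: both are infinite and for some `k` the increasing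
enumerations of `A \ k` and `B \ k` satisfy `a₀ < b₀ < a₁ < b₁ < ⋯`. -/
def Interlaced (A B : Set ℕ) : Prop :=
  A.Infinite ∧ B.Infinite ∧ ∃ k : ℕ, ∀ n : ℕ,
    Nat.nth (fun m => m ∈ A ∧ k ≤ m) n < Nat.nth (fun m => m ∈ B ∧ k ≤ m) n ∧
    Nat.nth (fun m => m ∈ B ∧ k ≤ m) n < Nat.nth (fun m => m ∈ A ∧ k ≤ m) (n + 1)

/-- `B(x) = {x(2n) + x(2n+1) : n < ω, x(2n) > 0}`. -/
def Bx (x : ℕ → ℕ) : Set ℕ :=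
  {m | ∃ n : ℕ, 0 < x (2 * n) ∧ m = x (2 * n) + x (2 * n + 1)}

/-- `Y(𝓑) = {x ∈ ωω : B(x) ∉ 𝓑}`. -/
def YFam (𝓑 : Set (Set ℕ)) : Set (ℕ → ℕ) := {x | Bx x ∉ 𝓑}

/-- `B^F_i = {F(2n)(i) + F(2n+1)(i) : n < ω, F(2n)(i) > 0}` for a play `F` of `G^ω`. -/
def BF (F : ℕ → ℕ → ℕ) (i : ℕ) : Set ℕ :=
  {m | ∃ n : ℕ, 0 < F (2 * n) i ∧ m = F (2 * n) i + F (2 * n + 1) i}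

/-- `D(A,B)` : `A` or `B` is finite, or for each `k` there are `a₁ < a₂ < a₃` in `A \ k`
with no element of `B` strictly between `a₁` and `a₃`. -/
def DRel (A B : Set ℕ) : Prop :=
  A.Finite ∨ B.Finite ∨ ∀ k : ℕ, ∃ a₁ a₂ a₃ : ℕ,
    a₁ ∈ A ∧ a₂ ∈ A ∧ a₃ ∈ A ∧ k ≤ a₁ ∧ a₁ < a₂ ∧ a₂ < a₃ ∧
    ¬ ∃ b ∈ B, a₁ < b ∧ b < a₃

/-! ### Construction for Theorem 29(2).

We construct, for each `0 < κ ≤ ℵ₀`, a set `𝓑 ⊆ ωω` by transfinite recursion on a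
well-order of length `𝔠` over all strategies for all finite-board games, and take
`A := 𝓑ᶜ`.  ONE's strategy `sstar` on infinitely many boards plays, on board `ξ`,
a pair `⟨ξ, code of TWO's past moves on all boards⟩`; thus each individual board of a
play following `sstar` "knows" the index of its board and TWO's whole array of moves
(coherence).  At each stage of the recursion we either defeat a ONE-strategy on
`n < κ` boards by letting TWO play a fresh sequence (placing the `n` resulting columns
into `𝓑`), or defeat a TWO-strategy by letting ONE play a fresh sequence on board `0`
(promising that column out of `𝓑`).  Freshness is arranged so that the columns of any
single play following `sstar` meet `𝓑` in at most `n < κ` boards. -/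

section Construction

attribute [local instance] Classical.propDecidable

open Function

/-- Encoding of an `n × n` block of an array of naturals. -/
private def encA (n : ℕ) (o : ℕ → ℕ → ℕ) : ℕ :=
  Encodable.encode (fun k : Fin n => fun j : Fin n => o k j)

private lemma encA_congr {n : ℕ} {o o' : ℕ → ℕ → ℕ}
    (h : ∀ k j, k < n → j < n → o k j = o' k j) : encA n o = encA n o' := by
  unfold encA
  congr 1
  funext k j
  exact h k j k.isLt j.isLt

private lemma encA_inj {n : ℕ} {o o' : ℕ → ℕ → ℕ} (h : encA n o = encA n o')
    {k j : ℕ} (hk : k < n) (hj : j < n) : o k j = o' k j := by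
  have h2 := Encodable.encode_injective h
  exact congrFun (congrFun h2 ⟨k, hk⟩) ⟨j, hj⟩

/-- ONE's strategy on `ℕ` many boards: on board `ξ` play the pair of `ξ` with a code
for TWO's past moves on all boards. -/
private def sstar : List (ℕ → ℕ) → ℕ → ℕ := fun L ξ =>
  Nat.pair ξ (encA L.length fun k j => L.getD k (fun _ => 0) j)

/-- The `ξ`-th column of an array. -/
private def col (ξ : ℕ) (q : ℕ → ℕ → ℕ) : ℕ → ℕ := fun m => q m ξ

private def oddArr (q : ℕ → ℕ → ℕ) : ℕ → ℕ → ℕ := fun k j => q (2 * k + 1) j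

/-- `x` is a coherent transcript for board `ξ` with TWO-array `o`. -/
private def Coh (x : ℕ → ℕ) (ξ : ℕ) (o : ℕ → ℕ → ℕ) : Prop :=
  (∀ n, x (2 * n) = Nat.pair ξ (encA n o)) ∧ ∀ n, x (2 * n + 1) = o n ξ

private lemma coh_col {q : ℕ → ℕ → ℕ} (hq : OneFollows sstar q) (ξ : ℕ) :
    Coh (col ξ q) ξ (oddArr q) := by
  constructor
  · intro n
    have h := congrFun (hq n) ξ
    have hlen : (List.ofFn fun i : Fin n => q (2 * (i : ℕ) + 1)).length = n :=
      List.length_ofFn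
    show q (2 * n) ξ = _
    rw [h, sstar]
    congr 1
    rw [hlen]
    apply encA_congr
    intro k j hk _
    have hk' : k < (List.ofFn fun i : Fin n => q (2 * (i : ℕ) + 1)).length := by
      rw [hlen]; exact hk
    rw [List.getD_eq_getElem _ _ hk', List.getElem_ofFn]
    rfl
  · intro n; rfl

private lemma coh_unique {x : ℕ → ℕ} {ξ ξ' : ℕ} {o o' : ℕ → ℕ → ℕ}
    (h : Coh x ξ o) (h' : Coh x ξ' o') : ξ = ξ' ∧ ∀ k j, o k j = o' k j := by
  have h0 : Nat.pair ξ (encA 0 o) = Nat.pair ξ' (encA 0 o') := by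
    rw [← h.1 0, h'.1 0]
  refine ⟨(Nat.pair_eq_pair.mp h0).1, fun k j => ?_⟩
  have hm : Nat.pair ξ (encA (max k j + 1) o) = Nat.pair ξ' (encA (max k j + 1) o') := by
    rw [← h.1 _, h'.1 _]
  exact encA_inj (Nat.pair_eq_pair.mp hm).2
    (Nat.lt_succ_of_le (le_max_left k j)) (Nat.lt_succ_of_le (le_max_right k j))

/-- Decode the TWO-array claimed by a coherent transcript. -/
private noncomputable def decOdd (x : ℕ → ℕ) : ℕ → ℕ → ℕ :=
  if h : ∃ p : ℕ × (ℕ → ℕ → ℕ), Coh x p.1 p.2 then h.choose.2 else fun _ _ => 0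

private lemma decOdd_eq {x : ℕ → ℕ} {ξ : ℕ} {o : ℕ → ℕ → ℕ} (h : Coh x ξ o) (k j : ℕ) :
    decOdd x k j = o k j := by
  have hex : ∃ p : ℕ × (ℕ → ℕ → ℕ), Coh x p.1 p.2 := ⟨(ξ, o), h⟩
  rw [decOdd, dif_pos hex]
  exact (coh_unique hex.choose_spec h).2 k j

private lemma mk_seq : #(ℕ → ℕ) = Cardinal.continuum := by
  rw [← Cardinal.power_def, Cardinal.mk_denumerable, Cardinal.aleph0_power_aleph0]

/-- Pick a sequence avoiding a given small set of sequences. -/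
private noncomputable def fresh (F : Set (ℕ → ℕ)) : ℕ → ℕ :=
  if h : ∃ y, y ∉ F then h.choose else fun _ => 0

private lemma fresh_not_mem {F : Set (ℕ → ℕ)} (hF : #F < Cardinal.continuum) :
    fresh F ∉ F := by
  have h : ∃ y, y ∉ F := by
    by_contra hc
    push_neg at hc
    have huniv : F = Set.univ := Set.eq_univ_of_forall hc
    rw [huniv, Cardinal.mk_univ, mk_seq] at hF
    exact lt_irrefl _ hF
  rw [fresh, dif_pos h]
  exact h.choose_spec

/-- TWO's counterplay against a ONE-strategy `σ` on `n` boards: play `s` on all boards. -/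
private def qOf {n : ℕ} (σ : List (Fin n → ℕ) → Fin n → ℕ) (s : ℕ → ℕ) : ℕ → Fin n → ℕ :=
  fun m =>
    if m % 2 = 0 then σ (List.ofFn fun k : Fin (m / 2) => fun _ => s k) else fun _ => s (m / 2)

private lemma qOf_odd {n : ℕ} (σ : List (Fin n → ℕ) → Fin n → ℕ) (s : ℕ → ℕ) (k : ℕ) :
    qOf σ s (2 * k + 1) = fun _ => s k := by
  rw [qOf, if_neg (by omega : ¬(2 * k + 1) % 2 = 0), (by omega : (2 * k + 1) / 2 = k)]

private lemma qOf_follows {n : ℕ} (σ : List (Fin n → ℕ) → Fin n → ℕ) (s : ℕ → ℕ) :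
    OneFollows σ (qOf σ s) := by
  intro m
  show (if (2 * m) % 2 = 0 then _ else _) = _
  rw [if_pos (by omega : (2 * m) % 2 = 0), (by omega : 2 * m / 2 = m)]
  refine congrArg σ (congrArg List.ofFn (funext fun k => ?_))
  exact (qOf_odd σ s k).symm

/-- ONE's counterplay against a TWO-strategy `τ` on `n` boards: play `u` on board `0`. -/
private def qE {n : ℕ} (u : ℕ → ℕ) : ℕ → Fin n → ℕ := fun k i => if (i : ℕ) = 0 then u k else 0

private def qT {n : ℕ} (τ : List (Fin n → ℕ) → Fin n → ℕ) (u : ℕ → ℕ) : ℕ → Fin n → ℕ :=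
  fun m =>
    if m % 2 = 0 then qE u (m / 2) else τ (List.ofFn fun i : Fin (m / 2 + 1) => qE u i)

private lemma qT_even {n : ℕ} (τ : List (Fin n → ℕ) → Fin n → ℕ) (u : ℕ → ℕ) (k : ℕ) :
    qT τ u (2 * k) = qE u k := by
  rw [qT, if_pos (by omega : (2 * k) % 2 = 0), (by omega : 2 * k / 2 = k)]

private lemma qT_follows {n : ℕ} (τ : List (Fin n → ℕ) → Fin n → ℕ) (u : ℕ → ℕ) :
    TwoFollows τ (qT τ u) := by
  intro m
  show (if (2 * m + 1) % 2 = 0 then _ else _) = _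
  rw [if_neg (by omega : ¬(2 * m + 1) % 2 = 0), (by omega : (2 * m + 1) / 2 = m)]
  refine congrArg τ (congrArg List.ofFn (funext fun i => ?_))
  exact (qT_even τ u i).symm

/-- Index type for all tasks: pairs of a number of boards and a strategy for ONE
(`inl`) or TWO (`inr`). -/
private def TaskSum : Type :=
  Σ n : ℕ, (List (Fin n → ℕ) → Fin n → ℕ) ⊕ (List (Fin n → ℕ) → Fin n → ℕ)

private instance : Nonempty TaskSum := ⟨⟨0, Sum.inl fun _ _ => 0⟩⟩

private lemma mk_tasksum_le : #TaskSum ≤ Cardinal.continuum := by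
  have hT : ∀ n : ℕ, #(List (Fin n → ℕ) → Fin n → ℕ) ≤ Cardinal.continuum := by
    intro n
    rw [← Cardinal.power_def]
    calc #(Fin n → ℕ) ^ #(List (Fin n → ℕ))
        ≤ Cardinal.continuum ^ #(List (Fin n → ℕ)) :=
          Cardinal.power_le_power_right
            (Cardinal.mk_le_aleph0.trans Cardinal.aleph0_le_continuum)
      _ ≤ Cardinal.continuum ^ (ℵ₀ : Cardinal) :=
          Cardinal.power_le_power_left Cardinal.continuum_ne_zero Cardinal.mk_le_aleph0
      _ = Cardinal.continuum := Cardinal.continuum_power_aleph0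
  have h : ∀ n : ℕ,
      #((List (Fin n → ℕ) → Fin n → ℕ) ⊕ (List (Fin n → ℕ) → Fin n → ℕ))
        ≤ Cardinal.continuum := by
    intro n
    simp only [Cardinal.mk_sum, Cardinal.lift_id]
    calc #(List (Fin n → ℕ) → Fin n → ℕ) + #(List (Fin n → ℕ) → Fin n → ℕ)
        ≤ Cardinal.continuum + Cardinal.continuum := add_le_add (hT n) (hT n)
      _ = Cardinal.continuum := Cardinal.add_eq_self Cardinal.aleph0_le_continuum
  calc #TaskSum = Cardinal.sum fun n : ℕ =>
        #((List (Fin n → ℕ) → Fin n → ℕ) ⊕ (List (Fin n → ℕ) → Fin n → ℕ)) :=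
        Cardinal.mk_sigma _
    _ ≤ Cardinal.sum fun _ : ℕ => Cardinal.continuum := Cardinal.sum_le_sum _ _ h
    _ = #ℕ * Cardinal.continuum := Cardinal.sum_const' _ _
    _ = Cardinal.continuum := by
        rw [Cardinal.mk_denumerable,
          Cardinal.mul_eq_max le_rfl Cardinal.aleph0_le_continuum]
        exact max_eq_right Cardinal.aleph0_le_continuum

/-- The well-ordered index of the recursion: `𝔠.ord.toType`; every proper initial
segment has cardinality `< 𝔠`. -/
private abbrev W : Type := (Cardinal.continuum.ord).ToType

private lemma mk_W : #W = Cardinal.continuum := by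
  rw [Cardinal.mk_toType, Cardinal.card_ord]

private lemma exists_taskOf : ∃ f : W → TaskSum, Surjective f := by
  have h : #TaskSum ≤ #W := by rw [mk_W]; exact mk_tasksum_le
  obtain ⟨e⟩ := (Cardinal.le_def _ _).mp h
  exact ⟨invFun e, fun t => ⟨e t, leftInverse_invFun e.injective t⟩⟩

private noncomputable def taskOf : W → TaskSum := exists_taskOf.choose

private lemma taskOf_surj : Surjective taskOf := exists_taskOf.choose_spec

/-- Sequences forbidden for TWO at a stage: all columns of arrays decoded from
previously added columns, together with previously promised TWO-parts. -/
private def FbOf (A P : Set (ℕ → ℕ)) : Set (ℕ → ℕ) :=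
  {y | ∃ x ∈ A, ∃ j, y = fun k => decOdd x k j} ∪ P

private def EvenSet (A : Set (ℕ → ℕ)) : Set (ℕ → ℕ) := (fun x k => x (2 * k)) '' A

/-- One step of the recursion. -/
private noncomputable def step (κ : Cardinal) (A P : Set (ℕ → ℕ)) : TaskSum → Set (ℕ → ℕ) × Set (ℕ → ℕ)
  | ⟨n, Sum.inl σ⟩ =>
      if (n : Cardinal) < κ then
        (Set.range fun i : Fin n => fun m => qOf σ (fresh (FbOf A P)) m i, ∅)
      else (∅, ∅)
  | ⟨n, Sum.inr τ⟩ =>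
      if h : 0 < n then
        (∅, {fun k => qT τ (fresh (EvenSet A)) (2 * k + 1) ⟨0, h⟩})
      else (∅, ∅)

/-- The recursion: at stage `w`, apply `step` to the unions of everything added or
promised at earlier stages. -/
private noncomputable def g (κ : Cardinal) : W → Set (ℕ → ℕ) × Set (ℕ → ℕ) :=
  (wellFounded_lt (α := W)).fix fun w ih =>
    step κ {x | ∃ v, ∃ h : v < w, x ∈ (ih v h).1} {x | ∃ v, ∃ h : v < w, x ∈ (ih v h).2}
      (taskOf w)

private def PAs (κ : Cardinal) (w : W) : Set (ℕ → ℕ) := {x | ∃ v, ∃ _ : v < w, x ∈ (g κ v).1}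

private def PPs (κ : Cardinal) (w : W) : Set (ℕ → ℕ) := {x | ∃ v, ∃ _ : v < w, x ∈ (g κ v).2}

private lemma g_eq (κ : Cardinal) (w : W) :
    g κ w = step κ (PAs κ w) (PPs κ w) (taskOf w) := by
  rw [g, WellFounded.fix_eq]
  rfl

/-- The recursively constructed "bad" set `𝓑`. -/
private def BB (κ : Cardinal) : Set (ℕ → ℕ) := {x | ∃ w : W, x ∈ (g κ w).1}

private lemma g_fst_le (κ : Cardinal) (w : W) : #(g κ w).1 ≤ ℵ₀ := by
  rw [g_eq]
  rcases h : taskOf w with ⟨n, σ | τ⟩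
  · rw [step]
    split_ifs
    · exact Cardinal.mk_range_le.trans ((Cardinal.mk_fin n).le.trans (Cardinal.nat_lt_aleph0 n).le)
    · rw [Cardinal.mk_emptyCollection]; exact zero_le
  · rw [step]
    split_ifs <;> · rw [Cardinal.mk_emptyCollection]; exact zero_le

private lemma g_snd_le (κ : Cardinal) (w : W) : #(g κ w).2 ≤ ℵ₀ := by
  rw [g_eq]
  rcases h : taskOf w with ⟨n, σ | τ⟩
  · rw [step]
    split_ifs <;> · rw [Cardinal.mk_emptyCollection]; exact zero_le
  · rw [step]
    split_ifs
    · rw [Cardinal.mk_singleton]; exact Cardinal.one_le_aleph0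
    · rw [Cardinal.mk_emptyCollection]; exact zero_le

private lemma mk_PAs_lt (κ : Cardinal) (w : W) : #(PAs κ w) < Cardinal.continuum := by
  have he : PAs κ w = ⋃ v : Set.Iio w, (g κ (v : W)).1 := by
    ext x
    simp only [PAs, Set.mem_setOf_eq, Set.mem_iUnion, Subtype.exists, Set.mem_Iio]
  rw [he]
  refine lt_of_le_of_lt (Cardinal.mk_iUnion_le _) ?_
  refine Cardinal.mul_lt_of_lt Cardinal.aleph0_le_continuum (Cardinal.mk_Iio_ord_toType w) ?_
  exact lt_of_le_of_lt (ciSup_le' fun v => g_fst_le κ v) Cardinal.aleph0_lt_continuum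

private lemma mk_PPs_lt (κ : Cardinal) (w : W) : #(PPs κ w) < Cardinal.continuum := by
  have he : PPs κ w = ⋃ v : Set.Iio w, (g κ (v : W)).2 := by
    ext x
    simp only [PPs, Set.mem_setOf_eq, Set.mem_iUnion, Subtype.exists, Set.mem_Iio]
  rw [he]
  refine lt_of_le_of_lt (Cardinal.mk_iUnion_le _) ?_
  refine Cardinal.mul_lt_of_lt Cardinal.aleph0_le_continuum (Cardinal.mk_Iio_ord_toType w) ?_
  exact lt_of_le_of_lt (ciSup_le' fun v => g_snd_le κ v) Cardinal.aleph0_lt_continuum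

private lemma mk_FbOf_lt (κ : Cardinal) (w : W) :
    #(FbOf (PAs κ w) (PPs κ w)) < Cardinal.continuum := by
  have h1 : {y : ℕ → ℕ | ∃ x ∈ PAs κ w, ∃ j, y = fun k => decOdd x k j}
      = ⋃ x : PAs κ w, Set.range fun j => fun k => decOdd (x : ℕ → ℕ) k j := by
    ext y
    simp only [Set.mem_setOf_eq, Set.mem_iUnion, Subtype.exists, Set.mem_range]
    constructor
    · rintro ⟨x, hx, j, hj⟩; exact ⟨x, hx, j, hj.symm⟩
    · rintro ⟨x, hx, j, hj⟩; exact ⟨x, hx, j, hj.symm⟩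
  rw [FbOf]
  refine lt_of_le_of_lt (Cardinal.mk_union_le _ _) ?_
  refine Cardinal.add_lt_of_lt Cardinal.aleph0_le_continuum ?_ (mk_PPs_lt κ w)
  rw [h1]
  refine lt_of_le_of_lt (Cardinal.mk_iUnion_le _) ?_
  refine Cardinal.mul_lt_of_lt Cardinal.aleph0_le_continuum (mk_PAs_lt κ w) ?_
  refine lt_of_le_of_lt (ciSup_le' fun x => ?_) Cardinal.aleph0_lt_continuum
  exact Cardinal.mk_range_le.trans (Cardinal.mk_denumerable ℕ).le

/-- Anything added to `𝓑` came from a stage defeating a ONE-strategy, with TWO playing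
a fresh sequence on all boards. -/
private lemma gmem_shape (κ : Cardinal) (w : W) {x : ℕ → ℕ} (hx : x ∈ (g κ w).1) :
    ∃ n σ, taskOf w = ⟨n, Sum.inl σ⟩ ∧ (n : Cardinal) < κ ∧
      ∃ i : Fin n, x = fun m => qOf σ (fresh (FbOf (PAs κ w) (PPs κ w))) m i := by
  rw [g_eq] at hx
  rcases h : taskOf w with ⟨n, σ | τ⟩ <;> rw [h] at hx
  · rw [step] at hx
    split_ifs at hx with hn
    · obtain ⟨i, hi⟩ := hx
      exact ⟨n, σ, rfl, hn, i, hi.symm⟩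
    · exact absurd hx (Set.notMem_empty x)
  · rw [step] at hx
    split_ifs at hx <;> exact absurd hx (Set.notMem_empty x)

private lemma two_part_of_mem (κ : Cardinal) (w : W) {x : ℕ → ℕ} (hx : x ∈ (g κ w).1) :
    (fun k => x (2 * k + 1)) = fresh (FbOf (PAs κ w) (PPs κ w)) := by
  obtain ⟨n, σ, -, -, i, rfl⟩ := gmem_shape κ w hx
  funext k
  show qOf σ (fresh (FbOf (PAs κ w) (PPs κ w))) (2 * k + 1) i = _
  rw [qOf_odd]

private lemma two_part_not_in (κ : Cardinal) (w : W) {x : ℕ → ℕ} (hx : x ∈ (g κ w).1) :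
    (fun k => x (2 * k + 1)) ∉ FbOf (PAs κ w) (PPs κ w) := by
  rw [two_part_of_mem κ w hx]
  exact fresh_not_mem (mk_FbOf_lt κ w)

/-- Defeating a ONE-strategy on `n < κ` boards. -/
private lemma oneDiag (κ : Cardinal) (w : W) {n : ℕ} {σ : List (Fin n → ℕ) → Fin n → ℕ}
    (hw : taskOf w = ⟨n, Sum.inl σ⟩) (hn : (n : Cardinal) < κ) :
    ∃ q : ℕ → Fin n → ℕ, OneFollows σ q ∧ ∀ i : Fin n, (fun m => q m i) ∈ BB κ := by
  refine ⟨qOf σ (fresh (FbOf (PAs κ w) (PPs κ w))), qOf_follows σ _, fun i => ⟨w, ?_⟩⟩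
  rw [g_eq, hw, step, if_pos hn]
  exact ⟨i, rfl⟩

/-- Defeating a TWO-strategy on `n` boards. -/
private lemma twoDiag (κ : Cardinal) (w : W) {n : ℕ} {τ : List (Fin n → ℕ) → Fin n → ℕ}
    (hw : taskOf w = ⟨n, Sum.inr τ⟩) (hn : 0 < n) :
    ∃ q : ℕ → Fin n → ℕ, TwoFollows τ q ∧ (fun m => q m ⟨0, hn⟩) ∉ BB κ := by
  refine ⟨qT τ (fresh (EvenSet (PAs κ w))), qT_follows τ _, ?_⟩
  rintro ⟨v, hv⟩
  rcases lt_trichotomy v w with hvw | rfl | hwv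
  · have hfr : fresh (EvenSet (PAs κ w)) ∉ EvenSet (PAs κ w) :=
      fresh_not_mem (lt_of_le_of_lt Cardinal.mk_image_le (mk_PAs_lt κ w))
    apply hfr
    refine ⟨fun m => qT τ (fresh (EvenSet (PAs κ w))) m ⟨0, hn⟩, ⟨v, hvw, hv⟩, ?_⟩
    funext k
    show qT τ (fresh (EvenSet (PAs κ w))) (2 * k) ⟨0, hn⟩ = _
    rw [qT_even]
    simp [qE]
  · rw [g_eq, hw, step, dif_pos hn] at hv
    exact absurd hv (Set.notMem_empty _)
  · apply two_part_not_in κ v hv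
    refine Or.inr ⟨w, hwv, ?_⟩
    rw [g_eq, hw, step, dif_pos hn]
    rfl

private lemma q0_inj {q : ℕ → ℕ → ℕ} (hq : OneFollows sstar q) {a b : ℕ}
    (h : q 0 a = q 0 b) : a = b := by
  have hq0 := hq 0
  rw [(by omega : 2 * 0 = 0)] at hq0
  rw [hq0] at h
  exact (Nat.pair_eq_pair.mp h).1

/-- The key counting bound: in any play following `sstar`, fewer than `κ` boards land
in `𝓑`. -/
private lemma mainBound (κ : Cardinal) (h0 : 0 < κ) {q : ℕ → ℕ → ℕ}
    (hq : OneFollows sstar q) :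
    ∃ n : ℕ, (n : Cardinal) < κ ∧ #{ξ : ℕ | col ξ q ∈ BB κ} ≤ n := by
  rcases Set.eq_empty_or_nonempty {ξ : ℕ | col ξ q ∈ BB κ} with hemp | ⟨ξ₀, hξ₀⟩
  · refine ⟨0, by simpa using h0, ?_⟩
    rw [hemp, Cardinal.mk_emptyCollection, Nat.cast_zero]
  obtain ⟨w₀, hw₀⟩ := hξ₀
  have key : ∀ ξ, col ξ q ∈ BB κ → col ξ q ∈ (g κ w₀).1 := by
    intro ξ hξ
    obtain ⟨w, hw⟩ := hξ
    rcases lt_trichotomy w w₀ with h | rfl | h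
    · exfalso
      apply two_part_not_in κ w₀ hw₀
      refine Or.inl ⟨col ξ q, ⟨w, h, hw⟩, ξ₀, ?_⟩
      funext k
      rw [decOdd_eq (coh_col hq ξ)]
      rfl
    · exact hw
    · exfalso
      apply two_part_not_in κ w hw
      refine Or.inl ⟨col ξ₀ q, ⟨w₀, h, hw₀⟩, ξ, ?_⟩
      funext k
      rw [decOdd_eq (coh_col hq ξ₀)]
      rfl
  obtain ⟨n, σ, hw, hn, -⟩ := gmem_shape κ w₀ hw₀
  refine ⟨n, hn, ?_⟩
  have hsel : ∀ ξ : {ξ : ℕ | col ξ q ∈ BB κ},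
      ∃ i : Fin n, (fun m => qOf σ (fresh (FbOf (PAs κ w₀) (PPs κ w₀))) m i) = col (ξ : ℕ) q := by
    intro ξ
    have h1 := key ξ ξ.2
    rw [g_eq, hw, step, if_pos hn] at h1
    exact h1
  choose f hf using hsel
  have hinj : Function.Injective f := by
    intro a b hab
    have hcc : col (a : ℕ) q = col (b : ℕ) q := by rw [← hf a, ← hf b, hab]
    exact Subtype.ext (q0_inj hq (congrFun hcc 0))
  have hle := Cardinal.mk_le_of_injective hinj
  rwa [Cardinal.mk_fin] at hle

end Construction

/-- Theorem (paper Thm 29(2)): for `0 < κ ≤ ℵ₀` there is `A ⊆ ωω` such that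
`GS_ω(A, n)` is undetermined for `0 < n < κ`, while ONE has a strategy in
`GS_ω(A, ℵ₀)` ensuring TWO wins on fewer than `κ` boards (hence ONE has a winning
strategy in `GS_ω(A, κ)`). -/
theorem statement_14 (κ : Cardinal.{0}) (h0 : 0 < κ) (hκ : κ ≤ ℵ₀) :
    ∃ A : Set (ℕ → ℕ),
      (∀ n : ℕ, 0 < n → (n : Cardinal) < κ → ¬ GSBoardsDetermined ℕ (Fin n) A) ∧
      (∃ σ : List (ℕ → ℕ) → ℕ → ℕ, ∀ q : ℕ → ℕ → ℕ, OneFollows σ q →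
        #{ξ : ℕ | (fun n => q n ξ) ∉ A} < κ) ∧
      ∀ K : Type, #K = κ → OneWinsGSBoards ℕ K A := by
  classical
  refine ⟨(BB κ)ᶜ, ?_, ?_, ?_⟩
  · rintro n hn hnκ (⟨σ, hσ⟩ | ⟨τ, hτ⟩)
    · obtain ⟨w, hw⟩ := taskOf_surj ⟨n, Sum.inl σ⟩
      obtain ⟨q, hqf, hall⟩ := oneDiag κ w hw hnκ
      obtain ⟨ξ, hξ⟩ := hσ q hqf
      exact hξ (hall ξ)
    · obtain ⟨w, hw⟩ := taskOf_surj ⟨n, Sum.inr τ⟩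
      obtain ⟨q, hqf, hnot⟩ := twoDiag κ w hw hn
      exact hnot (Set.notMem_compl_iff.mp (hτ q hqf ⟨0, hn⟩))
  · refine ⟨sstar, fun q hq => ?_⟩
    obtain ⟨n, hn, hle⟩ := mainBound κ h0 hq
    have hset : {ξ : ℕ | (fun n => q n ξ) ∉ (BB κ)ᶜ} = {ξ : ℕ | col ξ q ∈ BB κ} := by
      ext ξ
      rw [Set.mem_setOf_eq, Set.mem_setOf_eq, Set.mem_compl_iff, not_not]
      rfl
    rw [hset]
    exact lt_of_le_of_lt hle hn
  · intro K hK
    have hcnt : Countable K := Cardinal.mk_le_aleph0_iff.mp (hK ▸ hκ)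
    obtain ⟨e, he⟩ := Countable.exists_injective_nat' (α := K)
    set rx : (K → ℕ) → ℕ → ℕ := fun f j => if h : ∃ i, e i = j then f h.choose else 0 with hrx
    have hrx_e : ∀ (f : K → ℕ) (i : K), rx f (e i) = f i := by
      intro f i
      have hex : ∃ i', e i' = e i := ⟨i, rfl⟩
      simp only [hrx]
      rw [dif_pos hex]
      exact congrArg f (he hex.choose_spec)
    refine ⟨fun L i => sstar (L.map rx) (e i), ?_⟩
    intro q hq
    set qt : ℕ → ℕ → ℕ := fun m =>
      if m % 2 = 0 then sstar (List.ofFn fun k : Fin (m / 2) => rx (q (2 * (k : ℕ) + 1)))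
      else rx (q m) with hqt
    have hqt_odd : ∀ m, qt (2 * m + 1) = rx (q (2 * m + 1)) := by
      intro m
      simp only [hqt]
      rw [if_neg (by omega : ¬(2 * m + 1) % 2 = 0)]
    have hqt_even : ∀ m, qt (2 * m)
        = sstar (List.ofFn fun k : Fin m => rx (q (2 * (k : ℕ) + 1))) := by
      intro m
      simp only [hqt]
      rw [if_pos (by omega : (2 * m) % 2 = 0), (by omega : 2 * m / 2 = m)]
    have hqtf : OneFollows sstar qt := by
      intro m
      rw [hqt_even m]
      refine congrArg sstar (congrArg List.ofFn (funext fun k => ?_))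
      exact (hqt_odd k).symm
    have hcol : ∀ (i : K) (m : ℕ), q m i = qt m (e i) := by
      intro i m
      obtain ⟨t, rfl | rfl⟩ : ∃ t, m = 2 * t ∨ m = 2 * t + 1 := ⟨m / 2, by omega⟩
      · rw [hqt_even t]
        have h1 := congrFun (hq t) i
        rw [h1]
        show sstar ((List.ofFn fun k : Fin t => q (2 * (k : ℕ) + 1)).map rx) (e i) = _
        rw [List.map_ofFn]
        rfl
      · rw [hqt_odd t, hrx_e]
  -- now conclude from `mainBound`
    obtain ⟨n, hn, hle⟩ := mainBound κ h0 hqtf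
    by_contra hcon
    push_neg at hcon
    have hKS : ∀ i : K, (e i) ∈ {ξ : ℕ | col ξ qt ∈ BB κ} := by
      intro i
      have h1 : (fun m => q m i) ∈ BB κ := by
        have := hcon i
        rwa [Set.notMem_compl_iff] at this
      have h2 : col (e i) qt = fun m => q m i := by
        funext m
        exact (hcol i m).symm
      show col (e i) qt ∈ BB κ
      rw [h2]
      exact h1
    have hinj2 : Function.Injective fun i : K => (⟨e i, hKS i⟩ : {ξ : ℕ | col ξ qt ∈ BB κ}) :=
      fun a b hab => he (congrArg Subtype.val hab)
    have hK2 := Cardinal.mk_le_of_injective hinj2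
    rw [hK] at hK2
    exact lt_irrefl κ (lt_of_le_of_lt (hK2.trans hle) hn)

end GamePaper
end

section
/- Suppose 0 < κ ≤ ω and 𝓑 ⊆ P(ω) is such that for every sequence (B_i : i < κ) of elements of 𝓑 there are i < j < κ for which I(B_i,B_j) fails. Then there is a strategy σ for ONE in the κ-board game GS_ω(Y(𝓑),κ) which ensures that TWO wins on fewer than κ boards: in every play (f_n : n < ω) in which ONE follows σ, the set of ξ < κ with (f_n(ξ) : n < ω) ∉ Y(𝓑) has cardinality less than κ. -/
open Cardinal Set

namespace GamePaper

universe u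

/-- triangular numbers -/
def triNum : ℕ → ℕ
  | 0 => 0
  | b + 1 => triNum b + (b + 1)

/-- decode a natural number into (block, position) with position ≤ block -/
def tri : ℕ → ℕ × ℕ
  | 0 => (0, 0)
  | n + 1 => if (tri n).2 < (tri n).1 then ((tri n).1, (tri n).2 + 1) else ((tri n).1 + 1, 0)

lemma triNum_mono : Monotone triNum :=
  monotone_nat_of_le_succ fun b => by simp [triNum]

lemma idx_lt {b b' m m' : ℕ} (hm : m ≤ b) (hb : b < b') :
    triNum b + m < triNum b' + m' := by
  have h1 : triNum b + m < triNum (b + 1) := by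
    simp only [triNum]; omega
  have h2 : triNum (b + 1) ≤ triNum b' := triNum_mono hb
  omega

lemma tri_inv : ∀ n, (tri n).2 ≤ (tri n).1 ∧ triNum (tri n).1 + (tri n).2 = n := by
  intro n
  induction n with
  | zero => simp [tri, triNum]
  | succ n ih =>
    rcases ih with ⟨h1, h2⟩
    by_cases h : (tri n).2 < (tri n).1
    · simp only [tri, if_pos h]; omega
    · simp only [tri, if_neg h]
      have : (tri n).2 = (tri n).1 := le_antisymm h1 (not_lt.1 h)
      simp only [triNum]; omega

lemma tri_eq : ∀ b m, m ≤ b → tri (triNum b + m) = (b, m) := by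
  intro b
  induction b with
  | zero =>
    intro m hm
    interval_cases m
    simp [tri, triNum]
  | succ b ih =>
    have base : tri (triNum (b + 1)) = (b + 1, 0) := by
      have h1 : tri (triNum b + b) = (b, b) := ih b le_rfl
      have h2 : triNum (b + 1) = (triNum b + b) + 1 := by simp [triNum]; omega
      rw [h2, tri, h1]
      simp
    intro m hm
    induction m with
    | zero => simpa using base
    | succ m ihm =>
      have prev := ihm (by omega)
      have h3 : triNum (b + 1) + (m + 1) = (triNum (b + 1) + m) + 1 := rfl
      rw [h3, tri, prev]
      simp only
      rw [if_pos (by omega : m < b + 1)]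

/-- ONE's scalar values along a play; `c n` is TWO's relevant contribution in round `n`. -/
def mval (c : ℕ → ℕ) : ℕ → ℕ
  | 0 => 1
  | n + 1 => mval c n + (mval c n + c n)

lemma mval_congr (c c' : ℕ → ℕ) : ∀ n, (∀ m < n, c m = c' m) → mval c n = mval c' n := by
  intro n
  induction n with
  | zero => intro _; rfl
  | succ n ih =>
    intro h
    simp only [mval, ih (fun m hm => h m (by omega)), h n (by omega)]

lemma one_le_mval (c : ℕ → ℕ) (n : ℕ) : 1 ≤ mval c n := by
  induction n with
  | zero => simp [mval]
  | succ n ih => simp only [mval]; omega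

lemma elem_strictMono (c : ℕ → ℕ) : StrictMono (fun n => mval c n + c n) := by
  apply strictMono_nat_of_lt_succ
  intro n
  have h1 := one_le_mval c n
  have h2 : mval c (n + 1) = mval c n + (mval c n + c n) := rfl
  omega

/-- computing `Nat.nth` of the range of a strictly monotone function -/
lemma nth_eq_of_strictMono (p : ℕ → Prop) (g : ℕ → ℕ) (hg : StrictMono g)
    (hp : ∀ m, p m ↔ ∃ j, g j = m) (n : ℕ) : Nat.nth p n = g n := by
  classical
  have hcount : Nat.count p (g n) = n := by
    rw [Nat.count_eq_card_filter_range]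
    have : Finset.filter p (Finset.range (g n)) = (Finset.range n).image g := by
      ext m
      simp only [Finset.mem_filter, Finset.mem_range, Finset.mem_image, hp]
      constructor
      · rintro ⟨hlt, j, rfl⟩
        exact ⟨j, by rwa [← hg.lt_iff_lt], rfl⟩
      · rintro ⟨j, hj, rfl⟩
        exact ⟨hg hj, j, rfl⟩
    rw [this, Finset.card_image_of_injective _ hg.injective, Finset.card_range]
  have hpg : p (g n) := (hp (g n)).2 ⟨n, rfl⟩
  calc Nat.nth p n = Nat.nth p (Nat.count p (g n)) := by rw [hcount]
    _ = g n := Nat.nth_count hpg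

lemma interlaced_of (E : ℕ → ℕ) (hE : StrictMono E) (A B : Set ℕ) (k : ℕ) (u v : ℕ → ℕ)
    (huv : ∀ j, u j < v j) (hvu : ∀ j, v j < u (j + 1))
    (hA : ∀ m, (m ∈ A ∧ k ≤ m) ↔ ∃ j, E (u j) = m)
    (hB : ∀ m, (m ∈ B ∧ k ≤ m) ↔ ∃ j, E (v j) = m) : Interlaced A B := by
  have hu : StrictMono u := strictMono_nat_of_lt_succ fun j => (huv j).trans (hvu j)
  have hv : StrictMono v := strictMono_nat_of_lt_succ fun j => (hvu j).trans (huv (j + 1))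
  have hAinf : A.Infinite :=
    Set.infinite_of_injective_forall_mem (f := fun j => E (u j))
      (hE.comp hu).injective (fun j => ((hA _).2 ⟨j, rfl⟩).1)
  have hBinf : B.Infinite :=
    Set.infinite_of_injective_forall_mem (f := fun j => E (v j))
      (hE.comp hv).injective (fun j => ((hB _).2 ⟨j, rfl⟩).1)
  refine ⟨hAinf, hBinf, k, fun n => ?_⟩
  rw [nth_eq_of_strictMono _ _ (hE.comp hu) hA, nth_eq_of_strictMono _ _ (hE.comp hv) hB,
    nth_eq_of_strictMono _ _ (hE.comp hu) hA]
  exact ⟨hE (huv n), hE (hvu n)⟩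


/-- Lemma (paper Lemma 31): if `0 < κ ≤ ω` and `𝓑 ⊆ P(ω)` is such that in any
`κ`-sequence from `𝓑` two terms fail to be interlaced, then ONE has a strategy in
`GS_ω(Y(𝓑), κ)` ensuring that TWO wins on fewer than `κ` boards. -/
theorem statement_16 (K : Type) [Nonempty K] [Countable K] (𝓑 : Set (Set ℕ))
    (h : ∀ g : K → Set ℕ, (∀ i, g i ∈ 𝓑) →
      ∃ i j : K, i ≠ j ∧ ¬ Interlaced (g i) (g j)) :
    ∃ σ : List (K → ℕ) → K → ℕ, ∀ q : ℕ → K → ℕ, OneFollows σ q →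
      #{ξ : K | (fun n => q n ξ) ∉ YFam 𝓑} < #K := by
  classical
  obtain ⟨f, hf⟩ := exists_surjective_nat K
  set ord : K → ℕ := fun ξ => Nat.find (hf ξ) with hord_def
  have hford : ∀ ξ, f (ord ξ) = ξ := fun ξ => Nat.find_spec (hf ξ)
  have hordinj : Function.Injective ord := fun ξ η hh => by
    rw [← hford ξ, ← hford η, hh]
  refine ⟨fun L ξ =>
    if (tri L.length).2 = ord ξ then
      mval (fun m => (L.getD m (fun _ => 0)) (f ((tri m).2))) L.length
    else 0, ?_⟩
  intro q hq
  set c : ℕ → ℕ := fun m => q (2 * m + 1) (f ((tri m).2)) with hc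
  set E : ℕ → ℕ := fun n => mval c n + c n with hEdef
  have hSM : StrictMono E := elem_strictMono c
  have hq2 : ∀ n ξ, q (2 * n) ξ = if (tri n).2 = ord ξ then mval c n else 0 := by
    intro n ξ
    rw [hq n]
    simp only [List.length_ofFn]
    by_cases hcond : (tri n).2 = ord ξ
    · rw [if_pos hcond, if_pos hcond]
      apply mval_congr
      intro m hm
      rw [List.getD_eq_getElem _ _ (by simpa using hm)]
      simp
      rfl
    · rw [if_neg hcond, if_neg hcond]
  have hBx : ∀ ξ m, m ∈ Bx (fun n => q n ξ) ↔ ∃ b, ord ξ ≤ b ∧ E (triNum b + ord ξ) = m := by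
    intro ξ m
    simp only [Bx, Set.mem_setOf_eq]
    constructor
    · rintro ⟨n, hpos, rfl⟩
      have hcond : (tri n).2 = ord ξ := by
        by_contra hco
        rw [hq2, if_neg hco] at hpos
        omega
      have hqn : q (2 * n) ξ = mval c n := by rw [hq2, if_pos hcond]
      obtain ⟨hb1, hb2⟩ := tri_inv n
      refine ⟨(tri n).1, by rw [← hcond]; exact hb1, ?_⟩
      have hn : triNum (tri n).1 + ord ξ = n := by rw [← hcond]; exact hb2
      have hcn : c n = q (2 * n + 1) ξ := by rw [hc]; simp only; rw [hcond, hford]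
      rw [hn, hEdef]
      simp only
      rw [hcn, hqn]
    · rintro ⟨b, hb, rfl⟩
      have htri : tri (triNum b + ord ξ) = (b, ord ξ) := tri_eq b (ord ξ) hb
      refine ⟨triNum b + ord ξ, ?_, ?_⟩
      · rw [hq2, if_pos (by rw [htri])]
        exact one_le_mval c _
      · have hcn : c (triNum b + ord ξ) = q (2 * (triNum b + ord ξ) + 1) ξ := by
          rw [hc]; simp only; rw [htri]; simp only; rw [hford]
        rw [hq2, if_pos (by rw [htri]), hEdef]
        simp only
        rw [hcn]
  have key : ∀ ξ η : K, ξ ≠ η → Interlaced (Bx fun n => q n ξ) (Bx fun n => q n η) := by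
    intro ξ η hne
    have hoo : ord ξ ≠ ord η := fun hh => hne (hordinj hh)
    rcases lt_or_gt_of_ne hoo with hlt | hlt
    · refine interlaced_of E hSM _ _ (E (triNum (ord η) + ord ξ))
        (fun j => triNum (ord η + j) + ord ξ) (fun j => triNum (ord η + j) + ord η)
        (fun j => Nat.add_lt_add_left hlt _)
        (fun j => idx_lt (by omega) (by omega)) ?_ ?_
      · intro m
        rw [show (m ∈ Bx fun n => q n ξ) = (m ∈ Bx fun n => q n ξ) from rfl]
        constructor
        · rintro ⟨hm, hk⟩
          obtain ⟨b, hb, rfl⟩ := (hBx ξ m).1 hm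
          have hble : triNum (ord η) + ord ξ ≤ triNum b + ord ξ := hSM.le_iff_le.1 hk
          have hbe : ord η ≤ b := by
            by_contra hco
            push_neg at hco
            exact absurd hble (not_le.2 (idx_lt hb hco))
          exact ⟨b - ord η, by beta_reduce; rw [show ord η + (b - ord η) = b by omega]⟩
        · rintro ⟨j, rfl⟩
          refine ⟨(hBx ξ _).2 ⟨ord η + j, by omega, rfl⟩, ?_⟩
          exact hSM.monotone (Nat.add_le_add_right (triNum_mono (by omega)) _)
      · intro m
        constructor
        · rintro ⟨hm, hk⟩
          obtain ⟨b, hb, rfl⟩ := (hBx η m).1 hm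
          exact ⟨b - ord η, by beta_reduce; rw [show ord η + (b - ord η) = b by omega]⟩
        · rintro ⟨j, rfl⟩
          refine ⟨(hBx η _).2 ⟨ord η + j, by omega, rfl⟩, ?_⟩
          exact hSM.monotone (Nat.add_le_add (triNum_mono (by omega)) hlt.le)
    · refine interlaced_of E hSM _ _ (E (triNum (ord ξ) + ord ξ))
        (fun j => triNum (ord ξ + j) + ord ξ) (fun j => triNum (ord ξ + 1 + j) + ord η)
        (fun j => idx_lt (by omega) (by omega))
        (fun j => by
          beta_reduce
          rw [show ord ξ + (j + 1) = ord ξ + 1 + j by omega]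
          exact Nat.add_lt_add_left hlt _) ?_ ?_
      · intro m
        constructor
        · rintro ⟨hm, hk⟩
          obtain ⟨b, hb, rfl⟩ := (hBx ξ m).1 hm
          exact ⟨b - ord ξ, by beta_reduce; rw [show ord ξ + (b - ord ξ) = b by omega]⟩
        · rintro ⟨j, rfl⟩
          refine ⟨(hBx ξ _).2 ⟨ord ξ + j, by omega, rfl⟩, ?_⟩
          exact hSM.monotone (Nat.add_le_add_right (triNum_mono (by omega)) _)
      · intro m
        constructor
        · rintro ⟨hm, hk⟩
          obtain ⟨b, hb, rfl⟩ := (hBx η m).1 hm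
          have hble : triNum (ord ξ) + ord ξ ≤ triNum b + ord η := hSM.le_iff_le.1 hk
          have hbe : ord ξ + 1 ≤ b := by
            by_contra hco
            push_neg at hco
            have : triNum b + ord η < triNum (ord ξ) + ord ξ := by
              rcases Nat.lt_or_ge b (ord ξ) with hbb | hbb
              · exact idx_lt hb hbb
              · have : b = ord ξ := by omega
                subst this
                exact Nat.add_lt_add_left hlt _
            omega
          exact ⟨b - (ord ξ + 1), by beta_reduce; rw [show ord ξ + 1 + (b - (ord ξ + 1)) = b by omega]⟩
        · rintro ⟨j, rfl⟩
          refine ⟨(hBx η _).2 ⟨ord ξ + 1 + j, by omega, rfl⟩, ?_⟩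
          have : triNum (ord ξ) + ord ξ < triNum (ord ξ + 1 + j) + ord η :=
            idx_lt le_rfl (by omega)
          exact le_of_lt (hSM.lt_iff_lt.2 this)
  by_contra hcon
  have hle : #K ≤ #{ξ : K | (fun n => q n ξ) ∉ YFam 𝓑} := le_of_not_gt hcon
  obtain ⟨emb⟩ := (Cardinal.le_def _ _).1 hle
  obtain ⟨i, j, hij, hni⟩ := h (fun i => Bx (fun n => q n (emb i : K)))
    (fun i => not_not.1 (emb i).2)
  exact hni (key _ _ fun hh => hij (emb.injective (Subtype.ext hh)))

end GamePaper
end
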